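/- Every (a,b,c,d)-web contains no K_4-minor rooted at a, b, c, d. -/

import Mathlib

open SimpleGraph

variable {V : Type*}

/-- Branch-set definition of an `H`-minor in `G`. -/
def HasGraphMinor {W : Type*} (G : SimpleGraph V) (H : SimpleGraph W) : Prop :=
  ∃ B : W → Set V,
    (∀ w, (B w).Nonempty) ∧
    (∀ w, (G.induce (B w)).Connected) ∧
    (Pairwise fun w w' => Disjoint (B w) (B w')) ∧
    ∀ ⦃w w'⦄, H.Adj w w' → ∃ x ∈ B w, ∃ y ∈ B w', G.Adj x y

/-- `A,B,C,D` are the branch sets of a `K₄`-minor rooted at `a,b,c,d`. -/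
def RootedK4MinorOn (G : SimpleGraph V) (a b c d : V) (A B C D : Set V) : Prop :=
    a ∈ A ∧ b ∈ B ∧ c ∈ C ∧ d ∈ D ∧
    (G.induce A).Connected ∧ (G.induce B).Connected ∧
    (G.induce C).Connected ∧ (G.induce D).Connected ∧
    Disjoint A B ∧ Disjoint A C ∧ Disjoint A D ∧
    Disjoint B C ∧ Disjoint B D ∧ Disjoint C D ∧
    (∃ x ∈ A, ∃ y ∈ B, G.Adj x y) ∧ (∃ x ∈ A, ∃ y ∈ C, G.Adj x y) ∧
    (∃ x ∈ A, ∃ y ∈ D, G.Adj x y) ∧ (∃ x ∈ B, ∃ y ∈ C, G.Adj x y) ∧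
    (∃ x ∈ B, ∃ y ∈ D, G.Adj x y) ∧ (∃ x ∈ C, ∃ y ∈ D, G.Adj x y)

/-- A `K₄`-minor rooted at `a,b,c,d`. -/
def RootedK4Minor (G : SimpleGraph V) (a b c d : V) : Prop :=
  ∃ A B C D : Set V, RootedK4MinorOn G a b c d A B C D

/-- A `K₃`-minor rooted at `a,b,c`. -/
def RootedK3Minor (G : SimpleGraph V) (a b c : V) : Prop :=
  ∃ A B C : Set V,
    a ∈ A ∧ b ∈ B ∧ c ∈ C ∧
    (G.induce A).Connected ∧ (G.induce B).Connected ∧ (G.induce C).Connected ∧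
    Disjoint A B ∧ Disjoint A C ∧ Disjoint B C ∧
    (∃ x ∈ A, ∃ y ∈ B, G.Adj x y) ∧ (∃ x ∈ A, ∃ y ∈ C, G.Adj x y) ∧
    (∃ x ∈ B, ∃ y ∈ C, G.Adj x y)

/-- Add a new apex vertex adjacent to every vertex of `s`. -/
def Apex (G : SimpleGraph V) (s : Set V) : SimpleGraph (Option V) where
  Adj x y :=
    (∃ u v, x = some u ∧ y = some v ∧ G.Adj u v) ∨
    (∃ u, x = some u ∧ y = none ∧ u ∈ s) ∨
    (∃ v, x = none ∧ y = some v ∧ v ∈ s)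
  symm := by
    constructor
    rintro x y (⟨u, v, rfl, rfl, h⟩ | ⟨u, rfl, rfl, h⟩ | ⟨v, rfl, rfl, h⟩)
    · exact Or.inl ⟨v, u, rfl, rfl, h.symm⟩
    · exact Or.inr (Or.inr ⟨u, rfl, rfl, h⟩)
    · exact Or.inr (Or.inl ⟨v, rfl, rfl, h⟩)
  loopless := by
    constructor
    rintro x (⟨u, v, rfl, h, hadj⟩ | ⟨u, rfl, h, _⟩ | ⟨v, h, rfl, _⟩)
    · rw [Option.some_inj] at h; subst h; exact hadj.ne rfl
    · exact nomatch h
    · exact nomatch h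

/-- Planarity, via Wagner's theorem: no `K₅`-minor and no `K₃,₃`-minor. -/
def IsPlanar (G : SimpleGraph V) : Prop :=
  ¬ HasGraphMinor G (⊤ : SimpleGraph (Fin 5)) ∧
  ¬ HasGraphMinor G (completeBipartiteGraph (Fin 3) (Fin 3))

/-- `G` is `k`-connected: more than `k` vertices, and deleting fewer than `k`
vertices leaves a connected graph. -/
def KConnected (k : ℕ) (G : SimpleGraph V) : Prop :=
  k < Nat.card V ∧ ∀ S : Set V, S.Finite → S.ncard < k → (G.induce Sᶜ).Connected

/-- An `(s₁t₁,s₂t₂)`-linkage: an `s₁t₁`-path and an `s₂t₂`-path that are disjoint. -/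
def Linkage (G : SimpleGraph V) (s₁ t₁ s₂ t₂ : V) : Prop :=
  ∃ (P : G.Walk s₁ t₁) (Q : G.Walk s₂ t₂),
    P.IsPath ∧ Q.IsPath ∧ P.support.Disjoint Q.support

/-- `G` is obtained from its induced subgraph on `S` by attaching, to each triangle,
a (possibly empty) clique: `t x` records the triangle of the clique containing `x ∉ S`. -/
def CliqueExpansion (G : SimpleGraph V) (S : Set V) (t : V → Finset V) : Prop :=
  ∀ x ∉ S, ↑(t x) ⊆ S ∧ (t x).card = 3 ∧
    (∀ y ∈ t x, ∀ z ∈ t x, y ≠ z → G.Adj y z) ∧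
    (∀ y, G.Adj x y ↔ (y ∈ t x ∨ (y ∉ S ∧ y ≠ x ∧ t y = t x)))

/-- `H` is a planar graph with outerface cycle `(p,q,r,s)`, every internal face a
triangle, and every triangle a face.  (Combinatorial surrogate: `p,q,r,s` bound a
common face — witnessed by planarity of the graph with an apex added adjacent to
them — the edge count of a near-triangulation of a quadrilateral, and no
separating triangle.) -/
def IsQuadTriangulation {U : Type*} (H : SimpleGraph U) (p q r s : U) : Prop :=
  p ≠ q ∧ p ≠ r ∧ p ≠ s ∧ q ≠ r ∧ q ≠ s ∧ r ≠ s ∧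
  H.Adj p q ∧ H.Adj q r ∧ H.Adj r s ∧ H.Adj s p ∧
  IsPlanar H ∧ IsPlanar (Apex H {p, q, r, s}) ∧
  H.edgeSet.ncard + 7 = 3 * Nat.card U ∧
  ∀ T : Finset U, T.card = 3 → (∀ x ∈ T, ∀ y ∈ T, x ≠ y → H.Adj x y) →
    (((↑T)ᶜ : Set U) = ∅ ∨ (H.induce (↑T)ᶜ).Connected)

/-- `W` is an `(a,b,c,d)`-web. -/
def IsWeb (W : SimpleGraph V) (a b c d : V) : Prop :=
  ∃ (S : Set V) (ha : a ∈ S) (hb : b ∈ S) (hc : c ∈ S) (hd : d ∈ S),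
    IsQuadTriangulation (W.induce S) ⟨a, ha⟩ ⟨b, hb⟩ ⟨c, hc⟩ ⟨d, hd⟩ ∧
    ∃ t, CliqueExpansion W S t

/-- `W` is an `{a,b,c,d}`-web, i.e. an `(a',b',c',d')`-web for some ordering. -/
def IsUnorderedWeb (W : SimpleGraph V) (a b c d : V) : Prop :=
  ∃ p q r s : V, ({p, q, r, s} : Set V) = {a, b, c, d} ∧ IsWeb W p q r s

/-- A separation `(A, B)` of `G` (given by the vertex sets of the two sides). -/
def IsSeparation (G : SimpleGraph V) (A B : Set V) : Prop :=
  A ∪ B = Set.univ ∧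
  (∀ ⦃x y⦄, G.Adj x y → (x ∈ A ∧ y ∈ A) ∨ (x ∈ B ∧ y ∈ B)) ∧
  (A \ B).Nonempty ∧ (B \ A).Nonempty

section Helpers

variable {G : SimpleGraph V} {S : Set V} {t : V → Finset V}

lemma clique_adj (hce : CliqueExpansion G S t) {x y : V} (hx : x ∉ S)
    (h : G.Adj x y) : y ∈ t x ∨ (y ∉ S ∧ y ≠ x ∧ t y = t x) :=
  ((hce x hx).2.2.2 y).mp h

lemma tri_adj (hce : CliqueExpansion G S t) {x : V} (hx : x ∉ S)
    {u v : V} (hu : u ∈ t x) (hv : v ∈ t x) (huv : u ≠ v) : G.Adj u v :=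
  (hce x hx).2.2.1 u hu v hv huv

lemma tri_sub (hce : CliqueExpansion G S t) {x : V} (hx : x ∉ S) : ↑(t x) ⊆ S :=
  (hce x hx).1

lemma shortcut (hce : CliqueExpansion G S t) {A : Set V} {x y : ↥A}
    (p : (G.induce A).Walk x y) (hy : (y : V) ∈ S) :
    ∃ w, ∃ hw : w ∈ A ∩ S,
      (((x : V) ∈ S ∧ w = ↑x) ∨ ((x : V) ∉ S ∧ w ∈ t ↑x)) ∧
      (G.induce (A ∩ S)).Reachable ⟨w, hw⟩ ⟨↑y, ⟨y.2, hy⟩⟩ := by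
  induction p with
  | nil =>
      rename_i z
      exact ⟨↑z, ⟨z.2, hy⟩, Or.inl ⟨hy, rfl⟩, by rfl⟩
  | @cons u v y h p ih =>
      obtain ⟨w, hw, hc, hre⟩ := ih hy
      have hAdjG : G.Adj ↑u ↑v := h
      by_cases hu : (u : V) ∈ S
      · refine ⟨↑u, ⟨u.2, hu⟩, Or.inl ⟨hu, rfl⟩, ?_⟩
        rcases hc with ⟨hv, rfl⟩ | ⟨hvNS, hwT⟩
        · exact (SimpleGraph.Adj.reachable (by exact hAdjG :
            (G.induce (A ∩ S)).Adj ⟨↑u, ⟨u.2, hu⟩⟩ ⟨↑v, hw⟩)).trans hre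
        · have huT : (u : V) ∈ t ↑v := by
            rcases clique_adj hce hvNS hAdjG.symm with h' | ⟨h', _⟩
            · exact h'
            · exact absurd hu h'
          by_cases hwu : w = ↑u
          · subst hwu; exact hre
          · exact (SimpleGraph.Adj.reachable (by
              exact tri_adj hce hvNS huT hwT (Ne.symm hwu) :
              (G.induce (A ∩ S)).Adj ⟨↑u, ⟨u.2, hu⟩⟩ ⟨w, hw⟩)).trans hre
      · rcases hc with ⟨hv, rfl⟩ | ⟨hvNS, hwT⟩
        · have : (v : V) ∈ t ↑u := by
            rcases clique_adj hce hu hAdjG with h' | ⟨h', _⟩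
            · exact h'
            · exact absurd hv h'
          exact ⟨↑v, hw, Or.inr ⟨hu, this⟩, hre⟩
        · have : t ↑v = t ↑u := by
            rcases clique_adj hce hu hAdjG with h' | ⟨_, _, h'⟩
            · exact absurd (tri_sub hce hu h') hvNS
            · exact h'
          exact ⟨w, hw, Or.inr ⟨hu, this ▸ hwT⟩, hre⟩


lemma mem_proj (hce : CliqueExpansion G S t) {A : Set V}
    (hcon : (G.induce A).Connected) {r : V} (hr : r ∈ A ∩ S)
    {x : V} (hx : x ∈ A) :
    ∃ w ∈ A ∩ S, ((x ∈ S ∧ w = x) ∨ (x ∉ S ∧ w ∈ t x)) := by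
  obtain ⟨p⟩ := hcon.preconnected ⟨x, hx⟩ ⟨r, hr.1⟩
  obtain ⟨w, hw, hc, -⟩ := shortcut hce p hr.2
  exact ⟨w, hw, hc⟩

lemma conn_proj (hce : CliqueExpansion G S t) {A : Set V}
    (hcon : (G.induce A).Connected) {r : V} (hr : r ∈ A ∩ S) :
    (G.induce (A ∩ S)).Connected := by
  rw [SimpleGraph.connected_iff]
  refine ⟨?_, ⟨⟨r, hr⟩⟩⟩
  rintro ⟨u, hu⟩ ⟨v, hv⟩
  obtain ⟨p⟩ := hcon.preconnected ⟨u, hu.1⟩ ⟨v, hv.1⟩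
  obtain ⟨w, hw, hc, hre⟩ := shortcut hce p hv.2
  rcases hc with ⟨-, rfl⟩ | ⟨huS, -⟩
  · exact hre
  · exact absurd hu.2 huS

lemma edge_transfer (hce : CliqueExpansion G S t) {A B : Set V}
    (hconA : (G.induce A).Connected) (hconB : (G.induce B).Connected)
    {ra rb : V} (hra : ra ∈ A ∩ S) (hrb : rb ∈ B ∩ S) (hAB : Disjoint A B)
    (he : ∃ x ∈ A, ∃ y ∈ B, G.Adj x y) :
    ∃ x ∈ A ∩ S, ∃ y ∈ B ∩ S, G.Adj x y := by
  obtain ⟨x, hx, y, hy, hxy⟩ := he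
  obtain ⟨wx, hwx, hcx⟩ := mem_proj hce hconA hra hx
  obtain ⟨wy, hwy, hcy⟩ := mem_proj hce hconB hrb hy
  have hne : wx ≠ wy := fun h => (hAB.ne_of_mem hwx.1 hwy.1) (h ▸ rfl)
  rcases hcx with ⟨hxS, rfl⟩ | ⟨hxS, hwxT⟩
  · rcases hcy with ⟨hyS, rfl⟩ | ⟨hyS, hwyT⟩
    · exact ⟨wx, hwx, wy, hwy, hxy⟩
    · have hxT : wx ∈ t y := by
        rcases clique_adj hce hyS hxy.symm with h' | ⟨h', -⟩
        · exact h'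
        · exact absurd hxS h'
      exact ⟨wx, hwx, wy, hwy, tri_adj hce hyS hxT hwyT hne⟩
  · rcases hcy with ⟨hyS, rfl⟩ | ⟨hyS, hwyT⟩
    · have hyT : wy ∈ t x := by
        rcases clique_adj hce hxS hxy with h' | ⟨h', -⟩
        · exact h'
        · exact absurd hyS h'
      exact ⟨wx, hwx, wy, hwy, tri_adj hce hxS hwxT hyT hne⟩
    · have htt : t y = t x := by
        rcases clique_adj hce hxS hxy with h' | ⟨-, -, h'⟩
        · exact absurd (tri_sub hce hxS h') hyS
        · exact h'
      exact ⟨wx, hwx, wy, hwy, tri_adj hce hxS hwxT (htt ▸ hwyT) hne⟩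


def liftSet (S X : Set V) : Set (Option ↥S) := Option.some '' (Subtype.val ⁻¹' X)

lemma mem_liftSet {S X : Set V} {u : ↥S} (hu : (u : V) ∈ X) :
    some u ∈ liftSet S X := ⟨u, hu, rfl⟩

lemma liftSet_disjoint {S X Y : Set V} (h : Disjoint X Y) :
    Disjoint (liftSet S X) (liftSet S Y) := by
  refine Set.disjoint_left.2 ?_
  rintro o ⟨u, hu, rfl⟩ ⟨v, hv, h2⟩
  rw [Option.some_inj] at h2
  subst h2
  exact (h.ne_of_mem hu hv) rfl

lemma liftSet_none_disjoint {S X : Set V} :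
    Disjoint ({none} : Set (Option ↥S)) (liftSet S X) := by
  refine Set.disjoint_left.2 ?_
  rintro o rfl ⟨u, hu, h2⟩
  exact nomatch h2

lemma singleton_connected (H : SimpleGraph V) (v : V) :
    (H.induce {v}).Connected := by
  rw [SimpleGraph.connected_iff]
  refine ⟨?_, ⟨⟨v, rfl⟩⟩⟩
  rintro ⟨a, rfl⟩ ⟨b, hb⟩
  have : b = a := hb
  subst this
  rfl

lemma lift_connected {P : Set ↥S} {X : Set V} (hX : X ⊆ S)
    (hcon : (G.induce X).Connected) :
    ((Apex (G.induce S) P).induce (liftSet S X)).Connected := by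
  let f : G.induce X →g (Apex (G.induce S) P).induce (liftSet S X) :=
    ⟨fun u => ⟨some ⟨↑u, hX u.2⟩, mem_liftSet u.2⟩,
     fun {u v} h => Or.inl ⟨⟨↑u, hX u.2⟩, ⟨↑v, hX v.2⟩, rfl, rfl, h⟩⟩
  rw [SimpleGraph.connected_iff]
  obtain ⟨⟨x0, hx0⟩⟩ := hcon.nonempty
  refine ⟨?_, ⟨⟨some ⟨x0, hX hx0⟩, mem_liftSet hx0⟩⟩⟩
  rintro ⟨o1, u1, hu1, rfl⟩ ⟨o2, u2, hu2, rfl⟩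
  obtain ⟨p⟩ := hcon.preconnected ⟨↑u1, hu1⟩ ⟨↑u2, hu2⟩
  exact ⟨(p.map f).copy (Subtype.ext (congrArg some (Subtype.ext rfl)))
    (Subtype.ext (congrArg some (Subtype.ext rfl)))⟩

lemma apex_edge_lift {P : Set ↥S} {X Y : Set V} (hX : X ⊆ S) (hY : Y ⊆ S)
    (he : ∃ x ∈ X, ∃ y ∈ Y, G.Adj x y) :
    ∃ o ∈ liftSet S X, ∃ o' ∈ liftSet S Y, (Apex (G.induce S) P).Adj o o' := by
  obtain ⟨x, hx, y, hy, hxy⟩ := he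
  exact ⟨some ⟨x, hX hx⟩, mem_liftSet hx, some ⟨y, hY hy⟩, mem_liftSet hy,
    Or.inl ⟨⟨x, hX hx⟩, ⟨y, hY hy⟩, rfl, rfl, hxy⟩⟩

lemma apex_root_edge {P : Set ↥S} {X : Set V} (u : ↥S) (hu : (u : V) ∈ X)
    (huP : u ∈ P) :
    ∃ o ∈ ({none} : Set (Option ↥S)), ∃ o' ∈ liftSet S X,
      (Apex (G.induce S) P).Adj o o' :=
  ⟨none, rfl, some u, mem_liftSet hu, Or.inr (Or.inr ⟨u, rfl, rfl, huP⟩)⟩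

lemma exists_adj_symm {H : SimpleGraph V} {s s' : Set V}
    (h : ∃ x ∈ s, ∃ y ∈ s', H.Adj x y) : ∃ x ∈ s', ∃ y ∈ s, H.Adj x y := by
  obtain ⟨x, hx, y, hy, hxy⟩ := h
  exact ⟨y, hy, x, hx, hxy.symm⟩

end Helpers

/-- every `(a,b,c,d)`-web contains no `K₄`-minor rooted at `a,b,c,d`. -/
theorem web_no_rooted_K4_minor (G : SimpleGraph V) (a b c d : V)
    (h : IsWeb G a b c d) : ¬ RootedK4Minor G a b c d := by
  rintro ⟨A, B, C, D, hA, hB, hC, hD, cA, cB, cC, cD, dAB, dAC, dAD, dBC, dBD, dCD,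
    eAB, eAC, eAD, eBC, eBD, eCD⟩
  obtain ⟨S, ha, hb, hc, hd, hquad, t, hce⟩ := h
  have hra : a ∈ A ∩ S := ⟨hA, ha⟩
  have hrb : b ∈ B ∩ S := ⟨hB, hb⟩
  have hrc : c ∈ C ∩ S := ⟨hC, hc⟩
  have hrd : d ∈ D ∩ S := ⟨hD, hd⟩
  have cA' := conn_proj hce cA hra
  have cB' := conn_proj hce cB hrb
  have cC' := conn_proj hce cC hrc
  have cD' := conn_proj hce cD hrd
  have eAB' := edge_transfer hce cA cB hra hrb dAB eAB
  have eAC' := edge_transfer hce cA cC hra hrc dAC eAC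
  have eAD' := edge_transfer hce cA cD hra hrd dAD eAD
  have eBC' := edge_transfer hce cB cC hrb hrc dBC eBC
  have eBD' := edge_transfer hce cB cD hrb hrd dBD eBD
  have eCD' := edge_transfer hce cC cD hrc hrd dCD eCD
  obtain ⟨-, -, -, -, -, -, -, -, -, -, -, hap, -, -⟩ := hquad
  apply hap.1
  set P : Set ↥S := {⟨a, ha⟩, ⟨b, hb⟩, ⟨c, hc⟩, ⟨d, hd⟩} with hP
  have hPa : (⟨a, ha⟩ : ↥S) ∈ P := Set.mem_insert _ _
  have hPb : (⟨b, hb⟩ : ↥S) ∈ P := by simp [hP]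
  have hPc : (⟨c, hc⟩ : ↥S) ∈ P := by simp [hP]
  have hPd : (⟨d, hd⟩ : ↥S) ∈ P := by simp [hP]
  have E01 := apex_root_edge (G := G) (X := A ∩ S) ⟨a, ha⟩ hra hPa
  have E02 := apex_root_edge (G := G) (X := B ∩ S) ⟨b, hb⟩ hrb hPb
  have E03 := apex_root_edge (G := G) (X := C ∩ S) ⟨c, hc⟩ hrc hPc
  have E04 := apex_root_edge (G := G) (X := D ∩ S) ⟨d, hd⟩ hrd hPd
  have hsub : ∀ X : Set V, X ∩ S ⊆ S := fun X => Set.inter_subset_right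
  have E12 := apex_edge_lift (P := P) (hsub A) (hsub B) eAB'
  have E13 := apex_edge_lift (P := P) (hsub A) (hsub C) eAC'
  have E14 := apex_edge_lift (P := P) (hsub A) (hsub D) eAD'
  have E23 := apex_edge_lift (P := P) (hsub B) (hsub C) eBC'
  have E24 := apex_edge_lift (P := P) (hsub B) (hsub D) eBD'
  have E34 := apex_edge_lift (P := P) (hsub C) (hsub D) eCD'
  have dAB' : Disjoint (A ∩ S) (B ∩ S) :=
    dAB.mono Set.inter_subset_left Set.inter_subset_left
  have dAC' : Disjoint (A ∩ S) (C ∩ S) :=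
    dAC.mono Set.inter_subset_left Set.inter_subset_left
  have dAD' : Disjoint (A ∩ S) (D ∩ S) :=
    dAD.mono Set.inter_subset_left Set.inter_subset_left
  have dBC' : Disjoint (B ∩ S) (C ∩ S) :=
    dBC.mono Set.inter_subset_left Set.inter_subset_left
  have dBD' : Disjoint (B ∩ S) (D ∩ S) :=
    dBD.mono Set.inter_subset_left Set.inter_subset_left
  have dCD' : Disjoint (C ∩ S) (D ∩ S) :=
    dCD.mono Set.inter_subset_left Set.inter_subset_left
  refine ⟨![{none}, liftSet S (A ∩ S), liftSet S (B ∩ S),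
      liftSet S (C ∩ S), liftSet S (D ∩ S)], ?_, ?_, ?_, ?_⟩
  · intro w
    fin_cases w
    · exact ⟨none, rfl⟩
    · exact ⟨some ⟨a, ha⟩, mem_liftSet hra⟩
    · exact ⟨some ⟨b, hb⟩, mem_liftSet hrb⟩
    · exact ⟨some ⟨c, hc⟩, mem_liftSet hrc⟩
    · exact ⟨some ⟨d, hd⟩, mem_liftSet hrd⟩
  · intro w
    fin_cases w
    · exact singleton_connected _ none
    · exact lift_connected (hsub A) cA'
    · exact lift_connected (hsub B) cB'
    · exact lift_connected (hsub C) cC'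
    · exact lift_connected (hsub D) cD'
  · intro i j hij
    fin_cases i <;> fin_cases j <;>
      first
        | exact absurd rfl hij
        | exact liftSet_none_disjoint
        | exact liftSet_none_disjoint.symm
        | exact liftSet_disjoint dAB'
        | exact liftSet_disjoint dAB'.symm
        | exact liftSet_disjoint dAC'
        | exact liftSet_disjoint dAC'.symm
        | exact liftSet_disjoint dAD'
        | exact liftSet_disjoint dAD'.symm
        | exact liftSet_disjoint dBC'
        | exact liftSet_disjoint dBC'.symm
        | exact liftSet_disjoint dBD'
        | exact liftSet_disjoint dBD'.symm
        | exact liftSet_disjoint dCD'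
        | exact liftSet_disjoint dCD'.symm
  · intro w w' hadj
    fin_cases w <;> fin_cases w' <;>
      first
        | exact (hadj.ne rfl).elim
        | exact E01
        | exact exists_adj_symm E01
        | exact E02
        | exact exists_adj_symm E02
        | exact E03
        | exact exists_adj_symm E03
        | exact E04
        | exact exists_adj_symm E04
        | exact E12
        | exact exists_adj_symm E12
        | exact E13
        | exact exists_adj_symm E13
        | exact E14
        | exact exists_adj_symm E14
        | exact E23
        | exact exists_adj_symm E23
        | exact E24
        | exact exists_adj_symm E24
        | exact E34
        | exact exists_adj_symm E34
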